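/- arXiv:1511.05783 — 3 statements merged into one kernel-verified Lean document; each statement's English description precedes it below -/
import Mathlib

section
/- Let R be an algebra of type (𝒢, m, n) with no exotic products. Then every zero divisor in R ⊗̂ R lies in the two-sided ideal of R ⊗̂ R generated by the elements V̄ᵢ = Vᵢ⊗1 − 1⊗Vᵢ (1 ≤ i ≤ n−1) and W̄_S = W_S⊗1 − 1⊗W_S (S a subgee). -/
open scoped TensorProduct

/-- `[k] = {1,…,k}` as a finset of positive integers. -/
def bra (k : ℕ) : Finset ℕ+ := (Finset.range k).image (fun i => ⟨i + 1, i.succ_pos⟩)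

/-- The domination order on finite multisets of positive integers: `MLE S T` holds iff there
is a submultiset `T'` of `T` that can be matched up with `S` so that each element of `S` is
at most its partner in `T'`. -/
def MLE (S T : Multiset ℕ+) : Prop := ∃ T' ≤ T, Multiset.Rel (· ≤ ·) S T'

/-- `S` is a subgee of the collection `𝒢` of gees. -/
def Subgee (𝒢 : Finset (Finset ℕ+)) (S : Finset ℕ+) : Prop := ∃ G ∈ 𝒢, MLE S.val G.val

/-- `rho i T` is the number of elements of `T` greater than `i`. -/
def rho (i : ℕ+) (T : Finset ℕ+) : ℕ := (T.filter (fun t => i < t)).card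

/-- The ordered monomial `V_S = V_{s₁} ⋯ V_{s_k}` for `S = {s₁ < ⋯ < s_k}`. -/
def VSmon {R : Type} [Ring R] (V : ℕ+ → R) (S : Finset ℕ+) : R :=
  ((S.sort (· ≤ ·)).map V).prod

/-- An algebra of type `(𝒢, m, n)`. -/
structure IsPolygonAlgebra (n m : ℕ) (𝒢 : Finset (Finset ℕ+))
    (R : Type) [Ring R] [Algebra ℚ R] [FiniteDimensional ℚ R]
    (𝒜 : ℕ → Submodule ℚ R) [GradedAlgebra 𝒜]
    (V : ℕ+ → R) (W : Finset ℕ+ → R) : Prop where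
  hn : 4 ≤ n
  hm : 1 ≤ m
  gee_nonempty : 𝒢.Nonempty
  gee_sub : ∀ G ∈ 𝒢, G ⊆ bra (n - 1)
  gee_incomp : ∀ G ∈ 𝒢, ∀ G' ∈ 𝒢, MLE G.val G'.val → G = G'
  gee_card : ∀ G ∈ 𝒢, G.card ≤ m - 1
  gcomm : ∀ (i j : ℕ) (x y : R), x ∈ 𝒜 i → y ∈ 𝒜 j →
    x * y = ((-1 : ℚ)) ^ (i * j) • (y * x)
  V_mem : ∀ i : ℕ+, (i : ℕ) ≤ n - 1 → V i ∈ 𝒜 1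
  W_mem : ∀ S : Finset ℕ+, Subgee 𝒢 S → W S ∈ 𝒜 (m - S.card)
  VS_ne : ∀ S : Finset ℕ+, S ⊆ bra (n - 1) → (VSmon V S ≠ 0 ↔ Subgee 𝒢 S)
  basis_indep : LinearIndependent ℚ
    (Sum.elim (fun S : {S : Finset ℕ+ // Subgee 𝒢 S} => VSmon V S.1)
      (fun S : {S : Finset ℕ+ // Subgee 𝒢 S} => W S.1))
  basis_span : Submodule.span ℚ (Set.range
    (Sum.elim (fun S : {S : Finset ℕ+ // Subgee 𝒢 S} => VSmon V S.1)
      (fun S : {S : Finset ℕ+ // Subgee 𝒢 S} => W S.1))) = ⊤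
  VW : ∀ S S' : Finset ℕ+, Subgee 𝒢 S → Subgee 𝒢 S' → S.card = S'.card →
    VSmon V S * W S' = if S = S' then W ∅ else 0
  WW : ∀ S S' : Finset ℕ+, Subgee 𝒢 S → Subgee 𝒢 S' → S.card + S'.card = m →
    W S * W S' = 0

/-- `R` has no exotic products. -/
def NoExoticProducts (n : ℕ) (𝒢 : Finset (Finset ℕ+))
    {R : Type} [Ring R] [Algebra ℚ R] (V : ℕ+ → R) (W : Finset ℕ+ → R) : Prop :=
  (∀ S S' : Finset ℕ+, Subgee 𝒢 S → Subgee 𝒢 S' → W S * W S' = 0) ∧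
  (∀ i : ℕ+, (i : ℕ) ≤ n - 1 → ∀ S : Finset ℕ+, Subgee 𝒢 S →
    (i ∈ S → V i * W S = ((-1 : ℚ)) ^ (rho i (S.erase i)) • W (S.erase i)) ∧
    (i ∉ S → V i * W S = 0))

section Tensor

variable {R : Type} [Ring R] [Algebra ℚ R] (𝒜 : ℕ → Submodule ℚ R) [GradedAlgebra 𝒜]

/-- The multiplication map `μ : R ⊗̂ R → R`. -/
noncomputable def muMap : (𝒜 ᵍ⊗[ℚ] 𝒜) →ₗ[ℚ] R :=
  (LinearMap.mul' ℚ R).comp (GradedTensorProduct.of ℚ 𝒜 𝒜).symm.toLinearMap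

/-- `x ⊗ y` as an element of the graded tensor product `R ⊗̂ R`. -/
noncomputable def tm (x y : R) : 𝒜 ᵍ⊗[ℚ] 𝒜 := GradedTensorProduct.of ℚ 𝒜 𝒜 (x ⊗ₜ y)

/-- `ū = u ⊗ 1 - 1 ⊗ u`. -/
noncomputable def ubar (u : R) : 𝒜 ᵍ⊗[ℚ] 𝒜 := tm 𝒜 u 1 - tm 𝒜 1 u

/-- `V̄_D = ∏_{i ∈ D} V̄ᵢ` with factors in increasing order of `i`. -/
noncomputable def Vbar (V : ℕ+ → R) (D : Finset ℕ+) : 𝒜 ᵍ⊗[ℚ] 𝒜 :=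
  ((D.sort (· ≤ ·)).map (fun i => ubar 𝒜 (V i))).prod

/-- The set of `k` such that some product of `k` zero divisors in `R ⊗̂ R` is nonzero;
`zcl R` is the greatest element of this set. -/
def zclSet : Set ℕ :=
  {k : ℕ | ∃ L : List (𝒜 ᵍ⊗[ℚ] 𝒜), L.length = k ∧
    (∀ x ∈ L, muMap 𝒜 x = 0) ∧ L.prod ≠ 0}

end Tensor


section Aux

variable {R : Type} [Ring R] [Algebra ℚ R] (𝒜 : ℕ → Submodule ℚ R) [GradedAlgebra 𝒜]

lemma tm_left_mul (a b : R) : tm 𝒜 a 1 * tm 𝒜 b 1 = tm 𝒜 (a * b) 1 :=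
  (map_mul (GradedTensorProduct.includeLeft 𝒜 𝒜) a b).symm

lemma tm_right_mul (a b : R) : tm 𝒜 1 a * tm 𝒜 1 b = tm 𝒜 1 (a * b) :=
  (map_mul (GradedTensorProduct.includeRight 𝒜 𝒜) a b).symm

lemma tm_cross_mul (a b : R) : tm 𝒜 a 1 * tm 𝒜 1 b = tm 𝒜 a b :=
  GradedTensorProduct.tmul_one_mul_one_tmul 𝒜 𝒜 a b

lemma tm_add_right (a b c : R) : tm 𝒜 a (b + c) = tm 𝒜 a b + tm 𝒜 a c := by
  unfold tm; rw [TensorProduct.tmul_add, map_add]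

lemma tm_add_left (a b c : R) : tm 𝒜 (a + b) c = tm 𝒜 a c + tm 𝒜 b c := by
  unfold tm; rw [TensorProduct.add_tmul, map_add]

lemma tm_smul_left (q : ℚ) (a b : R) : tm 𝒜 (q • a) b = q • tm 𝒜 a b := by
  unfold tm; rw [← TensorProduct.smul_tmul', map_smul]

lemma tm_zero_right (a : R) : tm 𝒜 a 0 = 0 := by
  unfold tm; rw [TensorProduct.tmul_zero, map_zero]

lemma ubar_add (a b : R) : ubar 𝒜 (a + b) = ubar 𝒜 a + ubar 𝒜 b := by
  unfold ubar; rw [tm_add_left, tm_add_right]; abel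

lemma ubar_smul (q : ℚ) (a : R) : ubar 𝒜 (q • a) = q • ubar 𝒜 a := by
  unfold ubar
  rw [tm_smul_left, smul_sub]
  congr 1
  unfold tm
  rw [TensorProduct.tmul_smul, map_smul]

lemma ubar_one : ubar 𝒜 (1 : R) = 0 := by unfold ubar; rw [sub_self]

lemma ubar_mul (a b : R) :
    ubar 𝒜 (a * b) = ubar 𝒜 a * tm 𝒜 b 1 + tm 𝒜 1 a * ubar 𝒜 b := by
  unfold ubar
  rw [sub_mul, mul_sub, tm_left_mul, tm_right_mul]
  abel

lemma muMap_tm (a b : R) : muMap 𝒜 (tm 𝒜 a b) = a * b := by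
  unfold muMap tm
  simp [LinearMap.mul'_apply]

end Aux

lemma subgee_le {𝒢 : Finset (Finset ℕ+)} {S : Finset ℕ+} (hG : ∀ G ∈ 𝒢, ∀ g ∈ G, (g : ℕ) ≤ k)
    (hS : Subgee 𝒢 S) : ∀ i ∈ S, (i : ℕ) ≤ k := by
  obtain ⟨G, hGmem, T', hT', hrel⟩ := hS
  intro i hi
  obtain ⟨b, hb, hib⟩ := Multiset.exists_mem_of_rel_of_mem hrel (by simpa using hi)
  have hbG : b ∈ G := Multiset.mem_of_le hT' hb
  exact le_trans (by exact_mod_cast hib) (hG G hGmem b hbG)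

lemma bra_mem_le {k : ℕ} {g : ℕ+} (h : g ∈ bra k) : (g : ℕ) ≤ k := by
  replace h := Finset.mem_image.1 h
  obtain ⟨i, hi, rfl⟩ := h
  simpa using hi

/-- If `R` has no exotic products, every zero divisor of `R ⊗̂ R` lies in the two-sided ideal
generated by the elements `V̄ᵢ = Vᵢ⊗1 − 1⊗Vᵢ` (`1 ≤ i ≤ n−1`) and `W̄_S = W_S⊗1 − 1⊗W_S`
(`S` a subgee). -/
theorem stmt_13 (n m : ℕ) (𝒢 : Finset (Finset ℕ+))
    (R : Type) [Ring R] [Algebra ℚ R] [FiniteDimensional ℚ R]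
    (𝒜 : ℕ → Submodule ℚ R) [GradedAlgebra 𝒜] (V : ℕ+ → R) (W : Finset ℕ+ → R)
    (h : IsPolygonAlgebra n m 𝒢 R 𝒜 V W)
    (hne : NoExoticProducts n 𝒢 V W) :
    ∀ x : 𝒜 ᵍ⊗[ℚ] 𝒜, muMap 𝒜 x = 0 →
      x ∈ TwoSidedIdeal.span
        ({y | ∃ i : ℕ+, (i : ℕ) ≤ n - 1 ∧ y = ubar 𝒜 (V i)} ∪
         {y | ∃ S : Finset ℕ+, Subgee 𝒢 S ∧ y = ubar 𝒜 (W S)}) := by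
    classical
  set I := TwoSidedIdeal.span
        ({y | ∃ i : ℕ+, (i : ℕ) ≤ n - 1 ∧ y = ubar 𝒜 (V i)} ∪
         {y | ∃ S : Finset ℕ+, Subgee 𝒢 S ∧ y = ubar 𝒜 (W S)}) with hI
  -- products of elements with ubar in I
  have hlist : ∀ l : List R, (∀ a ∈ l, ubar 𝒜 a ∈ I) → ubar 𝒜 l.prod ∈ I := by
    intro l
    induction l with
    | nil => intro _; simpa [ubar_one] using I.zero_mem
    | cons a t ih =>
      intro hmem
      rw [List.prod_cons, ubar_mul]
      exact I.add_mem
        (I.mul_mem_right _ _ (hmem a List.mem_cons_self))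
        (I.mul_mem_left _ _ (ih fun b hb => hmem b (List.mem_cons_of_mem a hb)))
  -- ubar of every element of R is in I
  have hub : ∀ r : R, ubar 𝒜 r ∈ I := by
    have hsub : Set.range
        (Sum.elim (fun S : {S : Finset ℕ+ // Subgee 𝒢 S} => VSmon V S.1)
          (fun S : {S : Finset ℕ+ // Subgee 𝒢 S} => W S.1)) ⊆
        {r : R | ubar 𝒜 r ∈ I} := by
      rintro r ⟨x, rfl⟩
      cases x with
      | inl S =>
        show ubar 𝒜 (VSmon V S.1) ∈ I
        apply hlist
        intro a ha
        simp only [List.mem_map] at ha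
        obtain ⟨i, hi, rfl⟩ := ha
        have hiS : i ∈ S.1 := (Finset.mem_sort (α := ℕ+) (· ≤ ·)).1 hi
        have hile : (i : ℕ) ≤ n - 1 := by
          refine subgee_le (fun G hG g hg => bra_mem_le (h.gee_sub G hG hg)) S.2 i hiS
        exact TwoSidedIdeal.subset_span (Or.inl ⟨i, hile, rfl⟩)
      | inr S =>
        exact TwoSidedIdeal.subset_span (Or.inr ⟨S.1, S.2, rfl⟩)
    intro r
    let p : Submodule ℚ R :=
      { carrier := {r : R | ubar 𝒜 r ∈ I}
        add_mem' := fun ha hb => by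
          simp only [Set.mem_setOf_eq] at *
          rw [ubar_add]; exact I.add_mem ha hb
        zero_mem' := by
          have : ubar 𝒜 (0 : R) = 0 := by
            have := ubar_smul 𝒜 (0 : ℚ) (0 : R)
            simpa using this
          simp only [Set.mem_setOf_eq, this]; exact I.zero_mem
        smul_mem' := fun q x hx => by
          simp only [Set.mem_setOf_eq] at *
          rw [ubar_smul]
          rw [Algebra.smul_def]
          exact I.mul_mem_left _ _ hx }
    have : (⊤ : Submodule ℚ R) ≤ p := by
      rw [← h.basis_span]
      exact Submodule.span_le.2 hsub
    exact this Submodule.mem_top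
  -- main claim
  have key : ∀ x : 𝒜 ᵍ⊗[ℚ] 𝒜, x - tm 𝒜 1 (muMap 𝒜 x) ∈ I := by
    intro x
    have hx : x = GradedTensorProduct.of ℚ 𝒜 𝒜 ((GradedTensorProduct.of ℚ 𝒜 𝒜).symm x) :=
      (GradedTensorProduct.symm_of_of 𝒜 𝒜 x).symm
    rw [hx]
    generalize (GradedTensorProduct.of ℚ 𝒜 𝒜).symm x = y
    induction y with
    | zero =>
      simpa [map_zero, tm_zero_right] using I.zero_mem
    | tmul a b =>
      have h1 : GradedTensorProduct.of ℚ 𝒜 𝒜 (a ⊗ₜ b) = tm 𝒜 a b := rfl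
      rw [h1, muMap_tm]
      have h2 : tm 𝒜 a b - tm 𝒜 1 (a * b) = ubar 𝒜 a * tm 𝒜 1 b := by
        unfold ubar
        rw [sub_mul, tm_cross_mul, tm_right_mul]
      rw [h2]
      exact I.mul_mem_right _ _ (hub a)
    | add u v hu hv =>
      rw [map_add, map_add, tm_add_right]
      have : GradedTensorProduct.of ℚ 𝒜 𝒜 u + GradedTensorProduct.of ℚ 𝒜 𝒜 v -
          (tm 𝒜 1 (muMap 𝒜 (GradedTensorProduct.of ℚ 𝒜 𝒜 u)) +
           tm 𝒜 1 (muMap 𝒜 (GradedTensorProduct.of ℚ 𝒜 𝒜 v))) =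
          (GradedTensorProduct.of ℚ 𝒜 𝒜 u - tm 𝒜 1 (muMap 𝒜 (GradedTensorProduct.of ℚ 𝒜 𝒜 u))) +
          (GradedTensorProduct.of ℚ 𝒜 𝒜 v - tm 𝒜 1 (muMap 𝒜 (GradedTensorProduct.of ℚ 𝒜 𝒜 v))) := by
        abel
      rw [this]
      exact I.add_mem hu hv
  intro x hx
  have := key x
  rwa [hx, tm_zero_right, sub_zero] at this
end

section
/- Let R be an algebra of type (𝒢, m, n) with no exotic products. Let S and T be disjoint finite sets of positive integers and k a positive integer with k ∉ S ∪ T, such that S ∪ {k} and T are subgees. Then for every integer e, in R ⊗̂ R one has (V_k⊗1 − 1⊗V_k) · (W_{S∪{k}} ⊗ W_T + (−1)^e W_T ⊗ W_{S∪{k}}) = (−1)^{ρ_k(S)} (W_S ⊗ W_T + (−1)^{e + (m−|T|) + 1} W_T ⊗ W_S), where ρ_k(S) = #{t ∈ S : t > k}. -/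
open scoped TensorProduct

/-- In an algebra of type `(𝒢, m, n)` with no exotic products, if `S` and `T` are disjoint,
`k ∉ S ∪ T`, and `S ∪ {k}` and `T` are subgees, then for every integer `e`, in `R ⊗̂ R`:
`(V_k⊗1 − 1⊗V_k)(W_{S∪{k}} ⊗ W_T + (−1)^e W_T ⊗ W_{S∪{k}})
  = (−1)^{ρ_k(S)}(W_S ⊗ W_T + (−1)^{e+(m−|T|)+1} W_T ⊗ W_S)`. -/
theorem stmt_14 (n m : ℕ) (𝒢 : Finset (Finset ℕ+))
    (R : Type) [Ring R] [Algebra ℚ R] [FiniteDimensional ℚ R]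
    (𝒜 : ℕ → Submodule ℚ R) [GradedAlgebra 𝒜] (V : ℕ+ → R) (W : Finset ℕ+ → R)
    (h : IsPolygonAlgebra n m 𝒢 R 𝒜 V W)
    (hne : NoExoticProducts n 𝒢 V W)
    (S T : Finset ℕ+) (hST : Disjoint S T) (k : ℕ+) (hkS : k ∉ S) (hkT : k ∉ T)
    (hSk : Subgee 𝒢 (insert k S)) (hT : Subgee 𝒢 T) (e : ℤ) :
    ubar 𝒜 (V k) *
      (tm 𝒜 (W (insert k S)) (W T) + ((-1 : ℚ) ^ e) • tm 𝒜 (W T) (W (insert k S))) =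
    ((-1 : ℚ) ^ (rho k S)) •
      (tm 𝒜 (W S) (W T) +
        ((-1 : ℚ) ^ (e + ((m : ℤ) - (T.card : ℤ)) + 1)) • tm 𝒜 (W T) (W S)) := by
  classical
  -- k is at most n-1
  have hkn : (k : ℕ) ≤ n - 1 := by
    obtain ⟨G, hG, T', hT'le, hrel⟩ := hSk
    have hk : k ∈ (insert k S).val := Finset.mem_insert_self k S
    obtain ⟨b, hb, hkb⟩ := Multiset.exists_mem_of_rel_of_mem hrel hk
    have hbG : b ∈ G := Multiset.mem_of_le hT'le hb
    have hbb := h.gee_sub G hG hbG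
    obtain ⟨i, hi, rfl⟩ := Finset.mem_image.mp hbb
    rw [Finset.mem_range] at hi
    exact le_trans (show (k:ℕ) ≤ i+1 from by exact_mod_cast hkb) hi
  have hTm : T.card ≤ m := by
    obtain ⟨G, hG, T', hT'le, hrel⟩ := hT
    have h1 : Multiset.card T.val = Multiset.card T' := Multiset.card_eq_card_of_rel hrel
    have h2 : Multiset.card T' ≤ Multiset.card G.val := Multiset.card_le_card hT'le
    have h3 := h.gee_card G hG
    have := h.hm
    simp only [Finset.card] at *
    omega
  have hVk : V k ∈ 𝒜 1 := h.V_mem k hkn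
  have hWSk : W (insert k S) ∈ 𝒜 (m - (insert k S).card) := h.W_mem _ hSk
  have hWT : W T ∈ 𝒜 (m - T.card) := h.W_mem _ hT
  have hVkSk : V k * W (insert k S) = ((-1 : ℚ)) ^ (rho k S) • W S := by
    have := (hne.2 k hkn (insert k S) hSk).1 (Finset.mem_insert_self k S)
    rwa [Finset.erase_insert hkS] at this
  have hVkT : V k * W T = 0 := (hne.2 k hkn T hT).2 hkT
  set dT : ℕ := m - T.card with hdT
  set dSk : ℕ := m - (insert k S).card with hdSk
  -- the four products
  have e1 : tm 𝒜 (V k) 1 * tm 𝒜 (W (insert k S)) (W T)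
      = ((-1 : ℚ)) ^ (rho k S) • tm 𝒜 (W S) (W T) := by
    have h1 := GradedTensorProduct.tmul_one_mul_coe_tmul (R := ℚ) 𝒜 𝒜 (V k)
      (⟨W (insert k S), hWSk⟩ : 𝒜 dSk) (W T)
    simp only [GradedTensorProduct.tmul] at h1
    show _ * _ = _
    rw [tm, tm, tm, h1, hVkSk, ← TensorProduct.smul_tmul', map_smul]
  have e2 : tm 𝒜 (V k) 1 * tm 𝒜 (W T) (W (insert k S)) = 0 := by
    have h1 := GradedTensorProduct.tmul_one_mul_coe_tmul (R := ℚ) 𝒜 𝒜 (V k)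
      (⟨W T, hWT⟩ : 𝒜 dT) (W (insert k S))
    simp only [GradedTensorProduct.tmul] at h1
    rw [tm, tm, h1, hVkT, TensorProduct.zero_tmul, map_zero]
  have e3 : tm 𝒜 1 (V k) * tm 𝒜 (W (insert k S)) (W T) = 0 := by
    have h1 := GradedTensorProduct.tmul_coe_mul_coe_tmul (R := ℚ) 𝒜 𝒜 (1 : R)
      (⟨V k, hVk⟩ : 𝒜 1) (⟨W (insert k S), hWSk⟩ : 𝒜 dSk) (W T)
    simp only [GradedTensorProduct.tmul] at h1
    rw [tm, tm, h1, hVkT, TensorProduct.tmul_zero, map_zero, smul_zero]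
  have e4 : tm 𝒜 1 (V k) * tm 𝒜 (W T) (W (insert k S))
      = ((-1 : ℚ)) ^ dT • (((-1 : ℚ)) ^ (rho k S) • tm 𝒜 (W T) (W S)) := by
    have h1 := GradedTensorProduct.tmul_coe_mul_coe_tmul (R := ℚ) 𝒜 𝒜 (1 : R)
      (⟨V k, hVk⟩ : 𝒜 1) (⟨W T, hWT⟩ : 𝒜 dT) (W (insert k S))
    simp only [GradedTensorProduct.tmul] at h1
    rw [tm, tm, h1, hVkSk, one_mul, TensorProduct.tmul_smul, map_smul]
    rw [Units.smul_def, one_mul]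
    have hu : (((-1 : ℤˣ) ^ dT : ℤˣ) : ℤ) = (-1 : ℤ) ^ dT := by
      rw [Units.val_pow_eq_pow_val]; norm_num
    rw [hu, ← Int.cast_smul_eq_zsmul ℚ]
    push_cast
    rw [tm]
  -- the sign identity
  have hcast : ((m : ℤ) - (T.card : ℤ)) = (dT : ℤ) := by
    have := hTm; omega
  have hsign : ((-1 : ℚ)) ^ (e + ((m : ℤ) - (T.card : ℤ)) + 1)
      = -(((-1 : ℚ)) ^ e * ((-1 : ℚ)) ^ dT) := by
    rw [hcast, zpow_add₀ (by norm_num : (-1 : ℚ) ≠ 0),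
      zpow_add₀ (by norm_num : (-1 : ℚ) ≠ 0), zpow_natCast, zpow_one]
    ring
  rw [ubar, sub_mul, mul_add, mul_add, mul_smul_comm, mul_smul_comm,
    e1, e2, e3, e4, hsign]
  module
end

section
/- Let R be an algebra of type (𝒢, m, n) with m ≥ 2s, where s is the maximal cardinality of a gee. Then R automatically has no exotic products; that is, W_S W_{S'} = 0 for all subgees S, S', and for every i ∈ [n−1] and every subgee S: Vᵢ W_S = (−1)^{ρᵢ(S∖{i})} W_{S∖{i}} if i ∈ S, and Vᵢ W_S = 0 if i ∉ S, where ρᵢ(T) = #{t ∈ T : t > i}. Consequently, when m ≥ 2s the multiplicative structure of R is completely determined by the type conditions. -/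
open scoped TensorProduct

namespace PolyAux

lemma mem_bra {k : ℕ} {a : ℕ+} : a ∈ bra k ↔ (a : ℕ) ≤ k := by
  rw [bra]; erw [Finset.mem_image]; simp only [Finset.mem_range]
  constructor
  · rintro ⟨i, hi, rfl⟩; simpa using hi
  · intro hk
    have ha := a.pos
    refine ⟨(a : ℕ) - 1, by omega, ?_⟩
    apply Subtype.ext
    show (a : ℕ) - 1 + 1 = (a : ℕ)
    omega

lemma mle_mono {S T U : Multiset ℕ+} (hm : MLE S U) (hts : T ≤ S) : MLE T U := by
  obtain ⟨U', hU', hrel⟩ := hm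
  obtain ⟨D, rfl⟩ := Multiset.le_iff_exists_add.mp hts
  obtain ⟨U₀, U₁, h0, h1, hU⟩ := Multiset.rel_add_left.mp hrel
  subst hU
  exact ⟨U₀, le_trans (Multiset.le_add_right _ _) hU', h0⟩

lemma subgee_mono {𝒢 : Finset (Finset ℕ+)} {S T : Finset ℕ+}
    (hS : Subgee 𝒢 S) (hT : T ⊆ S) : Subgee 𝒢 T := by
  obtain ⟨G, hG, hm⟩ := hS
  exact ⟨G, hG, mle_mono hm (Finset.val_le_iff.mpr hT)⟩

lemma subgee_card_le {𝒢 : Finset (Finset ℕ+)} {S : Finset ℕ+}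
    (hS : Subgee 𝒢 S) : S.card ≤ 𝒢.sup Finset.card := by
  obtain ⟨G, hG, U', hU', hrel⟩ := hS
  have h1 : S.card = Multiset.card U' := Multiset.card_eq_card_of_rel hrel
  have h2 : Multiset.card U' ≤ Multiset.card G.val := Multiset.card_le_card hU'
  have h3 : Multiset.card G.val = G.card := rfl
  rw [h3] at h2
  exact le_trans (le_trans h1.le h2) (Finset.le_sup hG)

lemma subgee_sub_bra {𝒢 : Finset (Finset ℕ+)} {k : ℕ} {S : Finset ℕ+}
    (hsub : ∀ G ∈ 𝒢, G ⊆ bra k) (hS : Subgee 𝒢 S) : S ⊆ bra k := by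
  intro x hx
  have hx1 : Subgee 𝒢 {x} := subgee_mono hS (Finset.singleton_subset_iff.mpr hx)
  obtain ⟨G, hG, U', hU', hrel⟩ := hx1
  have : ({x} : Finset ℕ+).val = x ::ₘ 0 := rfl
  rw [this] at hrel
  obtain ⟨b, bs, hxb, _, rfl⟩ := Multiset.rel_cons_left.mp hrel
  have hbG : b ∈ G.val := Multiset.mem_of_le hU' (Multiset.mem_cons_self _ _)
  have hb : (b : ℕ) ≤ k := mem_bra.mp (hsub G hG hbG)
  exact mem_bra.mpr (le_trans hxb hb)

lemma subgee_empty {𝒢 : Finset (Finset ℕ+)} (hne : 𝒢.Nonempty) : Subgee 𝒢 ∅ := by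
  obtain ⟨G, hG⟩ := hne
  exact ⟨G, hG, 0, zero_le, Multiset.rel_zero_left.mpr rfl⟩


section Alg

variable {n m : ℕ} {𝒢 : Finset (Finset ℕ+)} {R : Type} [Ring R] [Algebra ℚ R]
  [FiniteDimensional ℚ R] {𝒜 : ℕ → Submodule ℚ R} [GradedAlgebra 𝒜]
  {V : ℕ+ → R} {W : Finset ℕ+ → R}

variable (h : IsPolygonAlgebra n m 𝒢 R 𝒜 V W)
include h

lemma Vanti {i j : ℕ+} (hi : (i : ℕ) ≤ n - 1) (hj : (j : ℕ) ≤ n - 1) :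
    V i * V j = -(V j * V i) := by
  have := h.gcomm 1 1 (V i) (V j) (h.V_mem i hi) (h.V_mem j hj)
  simpa using this

lemma Vsq {i : ℕ+} (hi : (i : ℕ) ≤ n - 1) : V i * V i = 0 := by
  have h1 := Vanti h hi hi
  have h2 : (2 : ℚ) • (V i * V i) = 0 := by
    rw [two_smul]
    rw [eq_neg_iff_add_eq_zero] at h1
    exact h1
  have := smul_eq_zero.mp h2
  simpa using this

lemma prod_mem (l : List ℕ+) (hl : ∀ j ∈ l, (j : ℕ) ≤ n - 1) :
    (l.map V).prod ∈ 𝒜 l.length := by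
  induction l with
  | nil => exact SetLike.GradedOne.one_mem
  | cons a t ih =>
    have h1 : V a * (t.map V).prod ∈ 𝒜 (1 + t.length) :=
      SetLike.mul_mem_graded (h.V_mem a (hl a (List.mem_cons_self))) (ih fun j hj => hl j (List.mem_cons_of_mem _ hj))
    rw [List.map_cons, List.prod_cons, List.length_cons]
    rwa [add_comm] at h1

lemma prod_mul_V (l : List ℕ+) (hl : ∀ j ∈ l, (j : ℕ) ≤ n - 1) {i : ℕ+}
    (hi : (i : ℕ) ≤ n - 1) :
    (l.map V).prod * V i = ((-1 : ℚ)) ^ l.length • (V i * (l.map V).prod) := by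
  induction l with
  | nil => simp
  | cons a t ih =>
    have ha := hl a (List.mem_cons_self)
    have ht : ∀ j ∈ t, (j : ℕ) ≤ n - 1 := fun j hj => hl j (List.mem_cons_of_mem _ hj)
    rw [List.map_cons, List.prod_cons, List.length_cons, mul_assoc, ih ht,
      mul_smul_comm]
    rw [show V a * (V i * (t.map V).prod) = (V a * V i) * (t.map V).prod by rw [mul_assoc],
      Vanti h ha hi]
    rw [neg_mul, smul_neg, mul_assoc, pow_succ, mul_neg_one, neg_smul]

lemma V_mul_prod (l : List ℕ+) (hl : ∀ j ∈ l, (j : ℕ) ≤ n - 1) {i : ℕ+}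
    (hi : (i : ℕ) ≤ n - 1) (hmem : i ∈ l) : V i * (l.map V).prod = 0 := by
  induction l with
  | nil => simp at hmem
  | cons a t ih =>
    have ha := hl a (List.mem_cons_self)
    have ht : ∀ j ∈ t, (j : ℕ) ≤ n - 1 := fun j hj => hl j (List.mem_cons_of_mem _ hj)
    rw [List.map_cons, List.prod_cons]
    rcases List.mem_cons.mp hmem with rfl | hmem'
    · rw [← mul_assoc, Vsq h hi, zero_mul]
    · rw [← mul_assoc, Vanti h hi ha, neg_mul, mul_assoc, ih ht hmem', mul_zero, neg_zero]


lemma prod_orderedInsert (l : List ℕ+) (hl : ∀ j ∈ l, (j : ℕ) ≤ n - 1) {i : ℕ+}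
    (hi : (i : ℕ) ≤ n - 1) (hs : l.Pairwise (· ≤ ·)) (hmem : i ∉ l) :
    (l.map V).prod * V i =
      ((-1 : ℚ)) ^ (l.filter (fun t => i < t)).length •
        (((l.orderedInsert (· ≤ ·) i).map V).prod) := by
  induction l with
  | nil => simp [List.orderedInsert]
  | cons a t ih =>
    have ha := hl a (List.mem_cons_self)
    have ht : ∀ j ∈ t, (j : ℕ) ≤ n - 1 := fun j hj => hl j (List.mem_cons_of_mem _ hj)
    have hst : t.Pairwise (· ≤ ·) := hs.of_cons
    have hmt : i ∉ t := fun hc => hmem (List.mem_cons_of_mem _ hc)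
    by_cases hcase : i ≤ a
    · have hgt : ∀ x ∈ a :: t, i < x := by
        intro x hx
        have hax : a ≤ x := by
          rcases List.mem_cons.mp hx with rfl | hx'
          · exact le_refl _
          · exact List.rel_of_pairwise_cons hs hx'
        have hne : x ≠ i := fun hc => hmem (hc ▸ hx)
        exact lt_of_le_of_ne (le_trans hcase hax) (Ne.symm hne)
      rw [List.orderedInsert, if_pos hcase]
      rw [List.filter_eq_self.mpr (fun x hx => decide_eq_true (hgt x hx))]
      rw [prod_mul_V h _ hl hi, List.map_cons (f := V) (a := i), List.prod_cons, List.length_cons]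
    · push_neg at hcase
      rw [List.orderedInsert, if_neg (not_le.mpr hcase)]
      have hfil : (a :: t).filter (fun t => i < t) = t.filter (fun t => i < t) := by
        rw [List.filter_cons_of_neg]
        simp [not_lt.mpr hcase.le]
      rw [hfil, List.map_cons, List.prod_cons, mul_assoc, ih ht hst hmt,
        mul_smul_comm, List.map_cons, List.prod_cons]

omit h in
lemma sort_insert_eq {i : ℕ+} {S : Finset ℕ+} (hmem : i ∉ S) :
    (insert i S).sort (· ≤ ·) = (S.sort (· ≤ ·)).orderedInsert (· ≤ ·) i := by
  apply List.Perm.eq_of_pairwise' (Finset.pairwise_sort _ _)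
    ((Finset.pairwise_sort S _).orderedInsert i _) ?_
  have h1 : ((insert i S).sort (· ≤ ·) : Multiset ℕ+) = (i :: S.sort (· ≤ ·) : List ℕ+) := by
    rw [Finset.sort_eq]
    show (insert i S).val = ↑(i :: S.sort (· ≤ ·))
    rw [Finset.insert_val_of_notMem hmem, ← Multiset.cons_coe, Finset.sort_eq]
  exact (Multiset.coe_eq_coe.mp h1).trans (List.perm_orderedInsert _ _ _).symm

omit h in
lemma rho_eq (i : ℕ+) (S : Finset ℕ+) :
    rho i S = ((S.sort (· ≤ ·)).filter (fun t => i < t)).length := by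
  rw [rho]
  have h1 : ((S.sort (· ≤ ·)).filter (fun t => i < t) : Multiset ℕ+) =
      Multiset.filter (fun t => i < t) (S.sort (· ≤ ·) : Multiset ℕ+) := by
    exact (Multiset.filter_coe _ _).symm
  have h2 := congrArg Multiset.card h1
  rw [Multiset.coe_card] at h2
  rw [h2, Finset.sort_eq]
  rfl

lemma VSmon_mem {S : Finset ℕ+} (hS : S ⊆ bra (n - 1)) : VSmon V S ∈ 𝒜 S.card := by
  have := prod_mem h (S.sort (· ≤ ·))
    (fun j hj => mem_bra.mp (hS ((Finset.mem_sort _).mp hj)))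
  rwa [Finset.length_sort] at this

lemma VSmon_mul_V_mem {S : Finset ℕ+} (hS : S ⊆ bra (n - 1)) {i : ℕ+}
    (hi : (i : ℕ) ≤ n - 1) (hmem : i ∈ S) : VSmon V S * V i = 0 := by
  rw [VSmon, prod_mul_V h _ (fun j hj => mem_bra.mp (hS ((Finset.mem_sort _).mp hj))) hi,
    V_mul_prod h _ (fun j hj => mem_bra.mp (hS ((Finset.mem_sort _).mp hj))) hi
      ((Finset.mem_sort _).mpr hmem), smul_zero]

lemma VSmon_mul_V_not_mem {S : Finset ℕ+} (hS : S ⊆ bra (n - 1)) {i : ℕ+}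
    (hi : (i : ℕ) ≤ n - 1) (hmem : i ∉ S) :
    VSmon V S * V i = ((-1 : ℚ)) ^ (rho i S) • VSmon V (insert i S) := by
  rw [VSmon, VSmon, sort_insert_eq hmem, rho_eq,
    prod_orderedInsert h _ (fun j hj => mem_bra.mp (hS ((Finset.mem_sort _).mp hj))) hi
      (Finset.pairwise_sort _ _) (fun hc => hmem ((Finset.mem_sort _).mp hc))]

lemma sup_le_m : 𝒢.sup Finset.card ≤ m - 1 :=
  Finset.sup_le fun G hG => h.gee_card G hG

lemma key {d : ℕ} (hd : 𝒢.sup Finset.card < d) {x : R} (hx : x ∈ 𝒜 d)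
    (hT : ∀ T : Finset ℕ+, Subgee 𝒢 T → m - T.card = d → VSmon V T * x = 0) :
    x = 0 := by
  classical
  set s := 𝒢.sup Finset.card with hs
  have hsm : s ≤ m - 1 := sup_le_m h
  set b := Sum.elim (fun S : {S : Finset ℕ+ // Subgee 𝒢 S} => VSmon V S.1)
    (fun S : {S : Finset ℕ+ // Subgee 𝒢 S} => W S.1) with hb
  let B : Module.Basis ({S : Finset ℕ+ // Subgee 𝒢 S} ⊕ {S : Finset ℕ+ // Subgee 𝒢 S}) ℚ R :=
    Module.Basis.mk h.basis_indep h.basis_span.ge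
  set c := B.repr x with hc
  set π : R →ₗ[ℚ] R := GradedAlgebra.proj 𝒜 d with hπ
  have hπ_apply : ∀ r : R, π r = ((DirectSum.decompose 𝒜 r) d : R) := fun r => rfl
  have hpx : π x = x := by rw [hπ_apply, DirectSum.decompose_of_mem_same 𝒜 hx]
  have hBb : ⇑B = b := Module.Basis.coe_mk _ _
  have hπbl : ∀ T : {S : Finset ℕ+ // Subgee 𝒢 S}, π (b (Sum.inl T)) = 0 := by
    intro T
    have hmem : VSmon V T.1 ∈ 𝒜 T.1.card :=
      VSmon_mem h (subgee_sub_bra h.gee_sub T.2)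
    have hne : T.1.card ≠ d := by
      have := subgee_card_le T.2
      omega
    rw [hπ_apply]
    exact DirectSum.decompose_of_mem_ne 𝒜 hmem hne
  have hπbr : ∀ T : {S : Finset ℕ+ // Subgee 𝒢 S},
      π (b (Sum.inr T)) = if m - T.1.card = d then W T.1 else 0 := by
    intro T
    have hw := h.W_mem T.1 T.2
    by_cases hcond : m - T.1.card = d
    · rw [if_pos hcond, hπ_apply]
      exact DirectSum.decompose_of_mem_same 𝒜 (hcond ▸ hw)
    · rw [if_neg hcond, hπ_apply]
      exact DirectSum.decompose_of_mem_ne 𝒜 hw hcond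
  have hx_eq : x = c.sum fun idx a => a • π (b idx) := by
    conv_lhs => rw [← hpx, ← B.linearCombination_repr x]
    rw [Finsupp.linearCombination_apply, map_finsuppSum]
    simp only [map_smul, hBb]
    rfl
  have hW0 : W ∅ ≠ 0 := by
    have := h.basis_indep.ne_zero (Sum.inr ⟨∅, subgee_empty h.gee_nonempty⟩)
    simpa using this
  have hcoeff : ∀ T : {S : Finset ℕ+ // Subgee 𝒢 S}, m - T.1.card = d →
      c (Sum.inr T) = 0 := by
    intro T hTd
    have h0 := hT T.1 T.2 hTd
    rw [hx_eq] at h0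
    rw [Finsupp.sum, Finset.mul_sum] at h0
    have hterm : ∀ idx ∈ c.support,
        VSmon V T.1 * (c idx • π (b idx)) =
          if idx = Sum.inr T then c idx • W ∅ else 0 := by
      intro idx _
      rcases idx with T' | T'
      · rw [hπbl T', smul_zero, mul_zero, if_neg (by simp)]
      · rw [hπbr T']
        by_cases hcond : m - T'.1.card = d
        · rw [if_pos hcond, mul_smul_comm]
          have hcards : T.1.card = T'.1.card := by
            have h1 := subgee_card_le T.2
            have h2 := subgee_card_le T'.2
            omega
          rw [h.VW T.1 T'.1 T.2 T'.2 hcards]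
          by_cases heq : T.1 = T'.1
          · have : T = T' := Subtype.ext heq
            rw [if_pos heq, if_pos (by rw [this])]
          · rw [if_neg heq, smul_zero, if_neg (fun hc => heq (by
              injection hc with hc'; rw [hc']))]
        · rw [if_neg hcond, smul_zero, mul_zero,
            if_neg (fun hc => hcond (by injection hc with hc'; rw [hc']; exact hTd))]
    rw [Finset.sum_congr rfl hterm] at h0
    rw [Finset.sum_ite_eq' c.support (Sum.inr T) (fun idx => c idx • W ∅)] at h0
    by_cases hsupp : Sum.inr T ∈ c.support
    · rw [if_pos hsupp] at h0
      rcases smul_eq_zero.mp h0 with h1 | h1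
      · exact h1
      · exact absurd h1 hW0
    · exact Finsupp.notMem_support_iff.mp hsupp
  rw [hx_eq]
  rw [Finsupp.sum]
  apply Finset.sum_eq_zero
  intro idx _
  rcases idx with T | T
  · rw [hπbl T, smul_zero]
  · rw [hπbr T]
    by_cases hcond : m - T.1.card = d
    · rw [if_pos hcond, hcoeff T hcond, zero_smul]
    · rw [if_neg hcond, smul_zero]
end Alg
end PolyAux

/-- If `m ≥ 2s`, where `s` is the maximal cardinality of a gee, then an algebra of type
`(𝒢, m, n)` automatically has no exotic products: `W_S W_{S'} = 0` for all subgees `S, S'`,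
and `Vᵢ W_S = (−1)^{ρᵢ(S∖{i})} W_{S∖{i}}` if `i ∈ S`, `Vᵢ W_S = 0` if `i ∉ S`. -/
theorem stmt_15 (n m : ℕ) (𝒢 : Finset (Finset ℕ+))
    (R : Type) [Ring R] [Algebra ℚ R] [FiniteDimensional ℚ R]
    (𝒜 : ℕ → Submodule ℚ R) [GradedAlgebra 𝒜] (V : ℕ+ → R) (W : Finset ℕ+ → R)
    (h : IsPolygonAlgebra n m 𝒢 R 𝒜 V W)
    (hm2s : 2 * 𝒢.sup Finset.card ≤ m) :
    NoExoticProducts n 𝒢 V W := by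
  classical
  have hsm : 𝒢.sup Finset.card ≤ m - 1 := PolyAux.sup_le_m h
  have hm1 : 1 ≤ m := h.hm
  constructor
  · intro S S' hS hS'
    have hScard := PolyAux.subgee_card_le hS
    have hS'card := PolyAux.subgee_card_le hS'
    by_cases hsum : S.card + S'.card = m
    · exact h.WW S S' hS hS' hsum
    · apply PolyAux.key h (d := (m - S.card) + (m - S'.card)) (by omega)
        (SetLike.mul_mem_graded (h.W_mem S hS) (h.W_mem S' hS'))
      intro T _ hTd
      exact absurd hTd (by omega)
  · intro i hi S hS
    have hScard := PolyAux.subgee_card_le hS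
    have hSbra := PolyAux.subgee_sub_bra h.gee_sub hS
    constructor
    · intro hiS
      have hS1 : 1 ≤ S.card := Finset.card_pos.mpr ⟨i, hiS⟩
      have herase_sub : Subgee 𝒢 (S.erase i) :=
        PolyAux.subgee_mono hS (Finset.erase_subset _ _)
      have herase_card : (S.erase i).card = S.card - 1 := Finset.card_erase_of_mem hiS
      have hx1 : V i * W S ∈ 𝒜 (m - S.card + 1) := by
        have := SetLike.mul_mem_graded (h.V_mem i hi) (h.W_mem S hS)
        have he : 1 + (m - S.card) = m - S.card + 1 := by omega
        rwa [he] at this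
      have hx2 : W (S.erase i) ∈ 𝒜 (m - S.card + 1) := by
        have := h.W_mem _ herase_sub
        have he : m - (S.erase i).card = m - S.card + 1 := by rw [herase_card]; omega
        rwa [he] at this
      have hkey : V i * W S - ((-1 : ℚ)) ^ (rho i (S.erase i)) • W (S.erase i) = 0 := by
        apply PolyAux.key h (d := m - S.card + 1) (by omega)
          (sub_mem hx1 (Submodule.smul_mem _ _ hx2))
        intro T hTsub hTd
        have hTcard := PolyAux.subgee_card_le hTsub
        have hTbra := PolyAux.subgee_sub_bra h.gee_sub hTsub
        have hTc : T.card + 1 = S.card := by omega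
        rw [mul_sub, mul_smul_comm, ← mul_assoc]
        by_cases hiT : i ∈ T
        · rw [PolyAux.VSmon_mul_V_mem h hTbra hi hiT, zero_mul,
            h.VW T (S.erase i) hTsub herase_sub (by omega),
            if_neg (fun (hc : T = S.erase i) => (Finset.notMem_erase i S) (hc ▸ hiT))]
          simp
        · rw [PolyAux.VSmon_mul_V_not_mem h hTbra hi hiT, smul_mul_assoc,
            h.VW T (S.erase i) hTsub herase_sub (by omega)]
          by_cases hsub : Subgee 𝒢 (insert i T)
          · rw [h.VW (insert i T) S hsub hS
              (by rw [Finset.card_insert_of_notMem hiT]; omega)]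
            by_cases heq : T = S.erase i
            · rw [heq, if_pos (Finset.insert_erase hiS), if_pos rfl, sub_self]
            · have h1 : insert i T ≠ S := fun hc => heq (by
                rw [← hc, Finset.erase_insert hiT])
              rw [if_neg h1, if_neg heq, smul_zero, smul_zero, sub_zero]
          · have hinsbra : insert i T ⊆ bra (n - 1) :=
              Finset.insert_subset (PolyAux.mem_bra.mpr hi) hTbra
            have hz : VSmon V (insert i T) = 0 := by
              by_contra hnz
              exact hsub ((h.VS_ne _ hinsbra).mp hnz)
            have heq : T ≠ S.erase i := fun hc => hsub (by
              rw [hc, Finset.insert_erase hiS]; exact hS)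
            rw [hz, zero_mul, smul_zero, if_neg heq, smul_zero, sub_zero]
      exact sub_eq_zero.mp hkey
    · intro hiS
      have hx1 : V i * W S ∈ 𝒜 (m - S.card + 1) := by
        have := SetLike.mul_mem_graded (h.V_mem i hi) (h.W_mem S hS)
        have he : 1 + (m - S.card) = m - S.card + 1 := by omega
        rwa [he] at this
      apply PolyAux.key h (d := m - S.card + 1) (by omega) hx1
      intro T hTsub hTd
      have hTcard := PolyAux.subgee_card_le hTsub
      have hTbra := PolyAux.subgee_sub_bra h.gee_sub hTsub
      have hTc : T.card + 1 = S.card := by omega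
      rw [← mul_assoc]
      by_cases hiT : i ∈ T
      · rw [PolyAux.VSmon_mul_V_mem h hTbra hi hiT, zero_mul]
      · rw [PolyAux.VSmon_mul_V_not_mem h hTbra hi hiT, smul_mul_assoc]
        by_cases hsub : Subgee 𝒢 (insert i T)
        · rw [h.VW (insert i T) S hsub hS
            (by rw [Finset.card_insert_of_notMem hiT]; omega),
            if_neg (fun (hc : insert i T = S) => hiS (hc ▸ Finset.mem_insert_self i T)), smul_zero]
        · have hinsbra : insert i T ⊆ bra (n - 1) :=
            Finset.insert_subset (PolyAux.mem_bra.mpr hi) hTbra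
          have hz : VSmon V (insert i T) = 0 := by
            by_contra hnz
            exact hsub ((h.VS_ne _ hinsbra).mp hnz)
          rw [hz, zero_mul, smul_zero]
end
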